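/- For any fixed unit vector p, the slowness function x ↦ f̄(x,p) = 1/f(x,p) is Lipschitz continuous with Lipschitz constant L = c̄₁ · sqrt(v̄ / (v̄ − c̄₀)⁵), independent of p. -/

import Mathlib

set_option maxHeartbeats 1000000

open scoped RealInnerProductSpace

/-- Key scalar inequality: the slowness as a function of the along-track component `a`
and crosswind magnitude `r` is Lipschitz with constant `v / (sqrt (v²-c0²) * (v-c0)²)`. -/
lemma slowness_key (v c0 : ℝ) (hv : 0 < v) (hc0 : c0 < v) (hc0' : 0 ≤ c0)
    (a b r s : ℝ) (hr0 : 0 ≤ r) (hs0 : 0 ≤ s)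
    (h1 : a ^ 2 + r ^ 2 ≤ c0 ^ 2) (h2 : b ^ 2 + s ^ 2 ≤ c0 ^ 2) :
    |1 / (Real.sqrt (v ^ 2 - r ^ 2) + a) - 1 / (Real.sqrt (v ^ 2 - s ^ 2) + b)| ≤
      v / (Real.sqrt (v ^ 2 - c0 ^ 2) * (v - c0) ^ 2) *
        Real.sqrt ((a - b) ^ 2 + (r - s) ^ 2) := by
  have hd : 0 < v - c0 := by linarith
  have hE2 : (0:ℝ) < v ^ 2 - c0 ^ 2 := by nlinarith
  set E := Real.sqrt (v ^ 2 - c0 ^ 2) with hE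
  have hEpos : 0 < E := Real.sqrt_pos.mpr hE2
  have hEsq : E ^ 2 = v ^ 2 - c0 ^ 2 := Real.sq_sqrt hE2.le
  have hrc : r ≤ c0 := by nlinarith
  have hsc : s ≤ c0 := by nlinarith
  have hanb : -c0 ≤ a := by nlinarith
  have hbnb : -c0 ≤ b := by nlinarith
  set S := Real.sqrt (v ^ 2 - r ^ 2) with hS
  set T := Real.sqrt (v ^ 2 - s ^ 2) with hT
  have hSsq : S ^ 2 = v ^ 2 - r ^ 2 := Real.sq_sqrt (by nlinarith)
  have hTsq : T ^ 2 = v ^ 2 - s ^ 2 := Real.sq_sqrt (by nlinarith)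
  have hSE : E ≤ S := Real.sqrt_le_sqrt (by nlinarith)
  have hTE : E ≤ T := Real.sqrt_le_sqrt (by nlinarith)
  -- lower bound on f = S + a
  have hfa : v - c0 ≤ S + a := by
    rcases le_or_gt (v - c0 - a) 0 with h | h
    · have := Real.sqrt_nonneg (v ^ 2 - r ^ 2); rw [← hS] at this; linarith
    · have : v - c0 - a ≤ S := (Real.le_sqrt' h).mpr
        (by nlinarith [mul_nonneg hd.le (show (0:ℝ) ≤ c0 + a by linarith)])
      linarith
  have hfb : v - c0 ≤ T + b := by
    rcases le_or_gt (v - c0 - b) 0 with h | h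
    · have := Real.sqrt_nonneg (v ^ 2 - s ^ 2); rw [← hT] at this; linarith
    · have : v - c0 - b ≤ T := (Real.le_sqrt' h).mpr
        (by nlinarith [mul_nonneg hd.le (show (0:ℝ) ≤ c0 + b by linarith)])
      linarith
  have hfapos : 0 < S + a := lt_of_lt_of_le hd hfa
  have hfbpos : 0 < T + b := lt_of_lt_of_le hd hfb
  -- |S - T| * E ≤ c0 * |r - s|
  have hST : |S - T| * E ≤ c0 * |r - s| := by
    have hErS : E * r ≤ c0 * S := by
      have h1' : (E * r) ^ 2 ≤ (c0 * S) ^ 2 := by nlinarith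
      have h2' := Real.sqrt_le_sqrt h1'
      rwa [Real.sqrt_sq (by positivity), Real.sqrt_sq (by positivity)] at h2'
    have hEsT : E * s ≤ c0 * T := by
      have h1' : (E * s) ^ 2 ≤ (c0 * T) ^ 2 := by nlinarith
      have h2' := Real.sqrt_le_sqrt h1'
      rwa [Real.sqrt_sq (by positivity), Real.sqrt_sq (by positivity)] at h2'
    have hdiff : (S - T) * (S + T) = (s - r) * (s + r) := by nlinarith
    have hSTpos : 0 < S + T := by linarith
    have habs : |S - T| * (S + T) = |r - s| * (r + s) := by
      have h3 : |S - T| * (S + T) = |(S - T) * (S + T)| := by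
        rw [abs_mul, abs_of_pos hSTpos]
      have h4 : |r - s| * (r + s) = |(s - r) * (s + r)| := by
        rw [abs_mul, abs_of_nonneg (show (0:ℝ) ≤ s + r by linarith), abs_sub_comm s r]
        ring
      rw [h3, h4, hdiff]
    have key : |S - T| * E * (S + T) ≤ c0 * |r - s| * (S + T) := by
      have e1 : |S - T| * E * (S + T) = E * (|r - s| * (r + s)) := by
        rw [mul_comm (|S - T|) E, mul_assoc, habs]
      rw [e1, show E * (|r - s| * (r + s)) = |r - s| * (E * r + E * s) by ring]
      calc |r - s| * (E * r + E * s) ≤ |r - s| * (c0 * S + c0 * T) :=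
            mul_le_mul_of_nonneg_left (by linarith) (abs_nonneg _)
        _ = c0 * |r - s| * (S + T) := by ring
    exact le_of_mul_le_mul_right key hSTpos
  -- |f - f'| * E ≤ v * Q
  set Q := Real.sqrt ((a - b) ^ 2 + (r - s) ^ 2) with hQ
  have hQsq : Q ^ 2 = (a - b) ^ 2 + (r - s) ^ 2 := Real.sq_sqrt (by positivity)
  have hQ0 : 0 ≤ Q := Real.sqrt_nonneg _
  have hff : |(S + a) - (T + b)| * E ≤ v * Q := by
    have h7 : |(S + a) - (T + b)| ≤ |S - T| + |a - b| := by
      rw [show (S + a) - (T + b) = (S - T) + (a - b) by ring]; exact abs_add_le _ _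
    have h8 : |(S + a) - (T + b)| * E ≤ |a - b| * E + c0 * |r - s| := by
      nlinarith [abs_nonneg (a - b), abs_nonneg (S - T)]
    have h9 : (|a - b| * E + c0 * |r - s|) ^ 2 ≤ (v * Q) ^ 2 := by
      have hcs : (|a - b| * E + c0 * |r - s|) ^ 2 ≤
          (E ^ 2 + c0 ^ 2) * (|a - b| ^ 2 + |r - s| ^ 2) := by
        nlinarith [sq_nonneg (c0 * |a - b| - E * |r - s|)]
      have e2 : |a - b| ^ 2 + |r - s| ^ 2 = (a - b) ^ 2 + (r - s) ^ 2 := by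
        rw [sq_abs, sq_abs]
      rw [e2] at hcs
      calc (|a - b| * E + c0 * |r - s|) ^ 2
          ≤ (E ^ 2 + c0 ^ 2) * ((a - b) ^ 2 + (r - s) ^ 2) := hcs
        _ = (v * Q) ^ 2 := by rw [mul_pow, hQsq, hEsq]; ring
    have h10 : |a - b| * E + c0 * |r - s| ≤ v * Q := by
      have hnn : 0 ≤ |a - b| * E + c0 * |r - s| := by positivity
      nlinarith [mul_nonneg hv.le hQ0]
    linarith
  -- assemble
  have hdiff2 : 1 / (S + a) - 1 / (T + b) = ((T + b) - (S + a)) / ((S + a) * (T + b)) := by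
    field_simp
  rw [hdiff2, abs_div, abs_of_pos (mul_pos hfapos hfbpos), abs_sub_comm,
    div_le_iff₀ (mul_pos hfapos hfbpos)]
  have hprod : (v - c0) ^ 2 ≤ (S + a) * (T + b) := by nlinarith
  have step1 : |(S + a) - (T + b)| ≤ v / E * Q := by
    rw [div_mul_eq_mul_div, le_div_iff₀ hEpos]; linarith
  have step2 : v / E * Q = v / (E * (v - c0) ^ 2) * Q * (v - c0) ^ 2 := by
    field_simp
  calc |(S + a) - (T + b)| ≤ v / E * Q := step1
    _ = v / (E * (v - c0) ^ 2) * Q * (v - c0) ^ 2 := step2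
    _ ≤ v / (E * (v - c0) ^ 2) * Q * ((S + a) * (T + b)) :=
        mul_le_mul_of_nonneg_left hprod (by positivity)

/-- The Lipschitz constant used above is at most `sqrt (v / (v - c0)^5)`. -/
lemma slowness_const_le (v c0 : ℝ) (hv : 0 < v) (hc0 : c0 < v) (hc0' : 0 ≤ c0) :
    v / (Real.sqrt (v ^ 2 - c0 ^ 2) * (v - c0) ^ 2) ≤ Real.sqrt (v / (v - c0) ^ 5) := by
  have hd : 0 < v - c0 := by linarith
  set d := v - c0 with hdd
  have hvd : Real.sqrt (v * d) ≤ Real.sqrt (v ^ 2 - c0 ^ 2) :=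
    Real.sqrt_le_sqrt (by nlinarith)
  have hvdpos : 0 < Real.sqrt (v * d) := Real.sqrt_pos.mpr (by positivity)
  have step1 : v / (Real.sqrt (v ^ 2 - c0 ^ 2) * d ^ 2) ≤ v / (Real.sqrt (v * d) * d ^ 2) := by
    gcongr
  refine le_trans step1 (le_of_eq ?_)
  have hsq : Real.sqrt (v * d) ^ 2 = v * d := Real.sq_sqrt (by positivity)
  rw [show v / d ^ 5 = (v / (Real.sqrt (v * d) * d ^ 2)) ^ 2 by
    rw [div_pow, mul_pow, hsq]; field_simp]
  rw [Real.sqrt_sq (by positivity)]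

/-- for any fixed unit vector `p`, the slowness `x ↦ 1/f(x,p)` is Lipschitz
with constant `L = c̄₁ · sqrt(v̄ / (v̄ − c̄₀)⁵)`, independent of `p`. -/
theorem slowness_lipschitz
    (v c0 c1 : ℝ) (hv : 0 < v) (hc0 : c0 < v)
    (w : EuclideanSpace ℝ (Fin 2) → EuclideanSpace ℝ (Fin 2))
    (hw : ContDiff ℝ 1 w)
    (hwb : ∀ x, ‖w x‖ ≤ c0)
    (hwd : ∀ x, ‖fderiv ℝ w x‖ ≤ c1)
    (p : EuclideanSpace ℝ (Fin 2)) (hp : ‖p‖ = 1) :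
    ∀ x y : EuclideanSpace ℝ (Fin 2),
      |1 / (Real.sqrt (v ^ 2 - ‖w x‖ ^ 2 + ⟪w x, p⟫ ^ 2) + ⟪w x, p⟫) -
        1 / (Real.sqrt (v ^ 2 - ‖w y‖ ^ 2 + ⟪w y, p⟫ ^ 2) + ⟪w y, p⟫)| ≤
      c1 * Real.sqrt (v / (v - c0) ^ 5) * ‖x - y‖ := by
  intro x y
  have hc0' : 0 ≤ c0 := le_trans (norm_nonneg _) (hwb x)
  have hc1' : 0 ≤ c1 := le_trans (norm_nonneg _) (hwd x)
  set a := ⟪w x, p⟫ with ha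
  set b := ⟪w y, p⟫ with hb
  set r := ‖w x - a • p‖ with hr
  set s := ‖w y - b • p‖ with hs
  have hr2 : r ^ 2 = ‖w x‖ ^ 2 - a ^ 2 := by
    have h := @norm_sub_sq_real (EuclideanSpace ℝ (Fin 2)) _ _ (w x) (a • p)
    rw [real_inner_smul_right, norm_smul, hp, mul_one, Real.norm_eq_abs, sq_abs, ← ha] at h
    rw [hr, h]; ring
  have hs2 : s ^ 2 = ‖w y‖ ^ 2 - b ^ 2 := by
    have h := @norm_sub_sq_real (EuclideanSpace ℝ (Fin 2)) _ _ (w y) (b • p)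
    rw [real_inner_smul_right, norm_smul, hp, mul_one, Real.norm_eq_abs, sq_abs, ← hb] at h
    rw [hs, h]; ring
  have h1 : a ^ 2 + r ^ 2 ≤ c0 ^ 2 := by
    rw [hr2]
    have := pow_le_pow_left₀ (norm_nonneg (w x)) (hwb x) 2
    linarith
  have h2 : b ^ 2 + s ^ 2 ≤ c0 ^ 2 := by
    rw [hs2]
    have := pow_le_pow_left₀ (norm_nonneg (w y)) (hwb y) 2
    linarith
  have ex : v ^ 2 - ‖w x‖ ^ 2 + a ^ 2 = v ^ 2 - r ^ 2 := by rw [hr2]; ring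
  have ey : v ^ 2 - ‖w y‖ ^ 2 + b ^ 2 = v ^ 2 - s ^ 2 := by rw [hs2]; ring
  rw [ex, ey]
  -- Q ≤ ‖w x - w y‖
  have e3 : (w x - a • p) - (w y - b • p) = (w x - w y) - (a - b) • p := by
    rw [sub_smul]; abel
  have hux : ‖(w x - a • p) - (w y - b • p)‖ ^ 2 = ‖w x - w y‖ ^ 2 - (a - b) ^ 2 := by
    rw [e3]
    have h := @norm_sub_sq_real (EuclideanSpace ℝ (Fin 2)) _ _ (w x - w y) ((a - b) • p)
    rw [real_inner_smul_right, norm_smul, hp, mul_one, Real.norm_eq_abs, sq_abs,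
      inner_sub_left, ← ha, ← hb] at h
    rw [h]; ring
  have hrs : |r - s| ≤ ‖(w x - a • p) - (w y - b • p)‖ := by
    rw [hr, hs]; exact abs_norm_sub_norm_le _ _
  have hQle : Real.sqrt ((a - b) ^ 2 + (r - s) ^ 2) ≤ ‖w x - w y‖ := by
    rw [show ‖w x - w y‖ = Real.sqrt (‖w x - w y‖ ^ 2) by rw [Real.sqrt_sq (norm_nonneg _)]]
    apply Real.sqrt_le_sqrt
    have h4 : (r - s) ^ 2 ≤ ‖(w x - a • p) - (w y - b • p)‖ ^ 2 := by
      rw [← sq_abs (r - s)]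
      exact pow_le_pow_left₀ (abs_nonneg _) hrs 2
    linarith [hux]
  -- Lipschitz bound on w
  have hw_lip : ‖w x - w y‖ ≤ c1 * ‖x - y‖ := by
    have := Convex.norm_image_sub_le_of_norm_fderiv_le (f := w) (s := Set.univ)
      (fun z _ => (hw.differentiable one_ne_zero).differentiableAt)
      (fun z _ => hwd z) convex_univ (Set.mem_univ y) (Set.mem_univ x)
    simpa using this
  -- assemble
  have key := slowness_key v c0 hv hc0 hc0' a b r s (norm_nonneg _) (norm_nonneg _) h1 h2
  have hcst := slowness_const_le v c0 hv hc0 hc0'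
  have hQ0 : 0 ≤ Real.sqrt ((a - b) ^ 2 + (r - s) ^ 2) := Real.sqrt_nonneg _
  have hcstnn : 0 ≤ v / (Real.sqrt (v ^ 2 - c0 ^ 2) * (v - c0) ^ 2) := by
    have hd : 0 < v - c0 := by linarith
    have : (0:ℝ) < v ^ 2 - c0 ^ 2 := by nlinarith
    positivity
  calc |1 / (Real.sqrt (v ^ 2 - r ^ 2) + a) - 1 / (Real.sqrt (v ^ 2 - s ^ 2) + b)|
      ≤ v / (Real.sqrt (v ^ 2 - c0 ^ 2) * (v - c0) ^ 2) *
        Real.sqrt ((a - b) ^ 2 + (r - s) ^ 2) := key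
    _ ≤ Real.sqrt (v / (v - c0) ^ 5) * (c1 * ‖x - y‖) := by
        apply mul_le_mul hcst (le_trans hQle hw_lip) hQ0 (Real.sqrt_nonneg _)
    _ = c1 * Real.sqrt (v / (v - c0) ^ 5) * ‖x - y‖ := by ring
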